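/- lim_{k→∞} [ (27/4)^{28k²} · θ(14k)^k · (7/8)^k · binom(9k−1, 8k−1)^k · binom(21k, 14k)^{2k−1} ]^{1/(36k²)} = 81/8, whenever θ: ℕ → ℝ_{>0} satisfies lim_{n→∞} θ(n)^{1/n} = 1. -/

import Mathlib

open Filter Real

-- step lemmas
lemma step_up {n m j : ℕ} (hj : j < m) (hm : m ≤ n) :
    n.choose j * m ^ j * (n - m) ^ (n - j) ≤
      n.choose (j+1) * m ^ (j+1) * (n - m) ^ (n - (j+1)) := by
  have hjn : j < n := lt_of_lt_of_le hj hm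
  have h1 : n - j = (n - (j+1)) + 1 := by omega
  have key : n.choose j * (n - m) * (j+1) ≤ n.choose (j+1) * m * (j+1) := by
    calc n.choose j * (n - m) * (j+1) = n.choose j * ((n-m)*(j+1)) := by ring
      _ ≤ n.choose j * ((n-j)*m) :=
          Nat.mul_le_mul_left _ (Nat.mul_le_mul (by omega) (by omega))
      _ = n.choose (j+1) * (j+1) * m := by rw [Nat.choose_succ_right_eq]; ring
      _ = n.choose (j+1) * m * (j+1) := by ring
  have key2 : n.choose j * (n - m) ≤ n.choose (j+1) * m :=
    Nat.le_of_mul_le_mul_right key (Nat.succ_pos j)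
  calc n.choose j * m ^ j * (n-m)^(n-j)
      = (n.choose j * (n-m)) * (m^j * (n-m)^(n-(j+1))) := by rw [h1, pow_succ]; ring
    _ ≤ (n.choose (j+1) * m) * (m^j * (n-m)^(n-(j+1))) := Nat.mul_le_mul_right _ key2
    _ = n.choose (j+1) * m^(j+1) * (n-m)^(n-(j+1)) := by rw [pow_succ]; ring

lemma step_down {n m j : ℕ} (hj : m ≤ j) (hjn : j < n) :
    n.choose (j+1) * m ^ (j+1) * (n - m) ^ (n - (j+1)) ≤
      n.choose j * m ^ j * (n - m) ^ (n - j) := by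
  have h1 : n - j = (n - (j+1)) + 1 := by omega
  have key : n.choose (j+1) * m * (j+1) ≤ n.choose j * (n - m) * (j+1) := by
    calc n.choose (j+1) * m * (j+1) = n.choose (j+1) * (j+1) * m := by ring
      _ = n.choose j * ((n-j)*m) := by rw [Nat.choose_succ_right_eq]; ring
      _ ≤ n.choose j * ((n-m)*(j+1)) :=
          Nat.mul_le_mul_left _ (Nat.mul_le_mul (by omega) (by omega))
      _ = n.choose j * (n-m) * (j+1) := by ring
  have key2 : n.choose (j+1) * m ≤ n.choose j * (n - m) :=
    Nat.le_of_mul_le_mul_right key (Nat.succ_pos j)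
  calc n.choose (j+1) * m^(j+1) * (n-m)^(n-(j+1))
      = (n.choose (j+1) * m) * (m^j * (n-m)^(n-(j+1))) := by rw [pow_succ]; ring
    _ ≤ (n.choose j * (n-m)) * (m^j * (n-m)^(n-(j+1))) := Nat.mul_le_mul_right _ key2
    _ = n.choose j * m^j * (n-m)^(n-j) := by rw [h1, pow_succ]; ring

lemma term_le_max {n m : ℕ} (hm : m ≤ n) :
    ∀ j ≤ n, n.choose j * m ^ j * (n - m) ^ (n - j) ≤
      n.choose m * m ^ m * (n - m) ^ (n - m) := by
  have up : ∀ d j, j + d = m → n.choose j * m ^ j * (n - m) ^ (n - j) ≤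
      n.choose m * m ^ m * (n - m) ^ (n - m) := by
    intro d
    induction d with
    | zero => intro j hj; subst hj; simp
    | succ d ih =>
        intro j hj
        have h1 : j < m := by omega
        exact le_trans (step_up h1 hm) (ih (j+1) (by omega))
  have down : ∀ d, m + d ≤ n → n.choose (m+d) * m ^ (m+d) * (n - m) ^ (n - (m+d)) ≤
      n.choose m * m ^ m * (n - m) ^ (n - m) := by
    intro d
    induction d with
    | zero => intro _; simp
    | succ d ih =>
        intro hd
        have : m + (d+1) = (m+d) + 1 := by omega
        rw [this]
        exact le_trans (step_down (by omega) (by omega)) (ih (by omega))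
  intro j hj
  rcases le_or_gt j m with h | h
  · exact up (m - j) j (by omega)
  · have := down (j - m) (by omega)
    have hjm : m + (j - m) = j := by omega
    rwa [hjm] at this

lemma choose_upper (n m : ℕ) (hm : m ≤ n) :
    n.choose m * m ^ m * (n - m) ^ (n - m) ≤ n ^ n := by
  have h := add_pow m (n - m) n
  rw [Nat.add_sub_cancel' hm] at h
  simp only [Nat.cast_id] at h
  rw [h]
  calc n.choose m * m ^ m * (n - m) ^ (n - m)
      = m ^ m * (n-m) ^ (n-m) * n.choose m := by ring
    _ ≤ ∑ j ∈ Finset.range (n+1), m ^ j * (n-m) ^ (n-j) * n.choose j :=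
        Finset.single_le_sum (f := fun j => m ^ j * (n-m) ^ (n-j) * n.choose j)
          (fun i _ => Nat.zero_le _) (Finset.mem_range.2 (Nat.lt_succ_of_le hm))

lemma choose_lower (n m : ℕ) (hm : m ≤ n) :
    n ^ n ≤ (n+1) * (n.choose m * m ^ m * (n - m) ^ (n - m)) := by
  have h := add_pow m (n - m) n
  rw [Nat.add_sub_cancel' hm] at h
  simp only [Nat.cast_id] at h
  rw [h]
  calc ∑ j ∈ Finset.range (n+1), m ^ j * (n-m) ^ (n-j) * n.choose j
      ≤ ∑ _j ∈ Finset.range (n+1), n.choose m * m ^ m * (n - m) ^ (n - m) := by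
        apply Finset.sum_le_sum
        intro i hi
        have := term_le_max hm i (by simpa using Nat.lt_succ_iff.mp (Finset.mem_range.1 hi))
        calc m ^ i * (n-m) ^ (n-i) * n.choose i
            = n.choose i * m ^ i * (n-m) ^ (n-i) := by ring
          _ ≤ _ := this
    _ = (n+1) * (n.choose m * m ^ m * (n - m) ^ (n - m)) := by
        rw [Finset.sum_const, Finset.card_range]; simp [mul_comm]

lemma log_choose_upper (n m : ℕ) (hm0 : 0 < m) (hmn : m < n) :
    Real.log (n.choose m) ≤ n * Real.log n - m * Real.log m - (n - m : ℕ) * Real.log (n - m : ℕ) := by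
  have hC : 0 < (n.choose m : ℝ) := by
    exact_mod_cast Nat.choose_pos hmn.le
  have h := choose_upper n m hmn.le
  have h' : (n.choose m : ℝ) * (m:ℝ) ^ m * ((n - m : ℕ):ℝ) ^ (n - m) ≤ (n:ℝ) ^ n := by
    exact_mod_cast h
  have hm' : (0:ℝ) < (m:ℝ) := by exact_mod_cast hm0
  have hnm : (0:ℝ) < ((n - m : ℕ):ℝ) := by
    have : 0 < n - m := by omega
    exact_mod_cast this
  have hn' : (0:ℝ) < (n:ℝ) := by exact_mod_cast hm0.trans hmn
  have hlog := Real.log_le_log (mul_pos (mul_pos hC (pow_pos hm' m)) (pow_pos hnm _))  h'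
  rw [Real.log_mul (mul_pos hC (pow_pos hm' m)).ne' (pow_pos hnm _).ne', Real.log_mul hC.ne' (pow_pos hm' m).ne',
    Real.log_pow, Real.log_pow, Real.log_pow] at hlog
  push_cast at hlog ⊢
  linarith

lemma log_choose_lower (n m : ℕ) (hm0 : 0 < m) (hmn : m < n) :
    n * Real.log n - m * Real.log m - (n - m : ℕ) * Real.log (n - m : ℕ) - Real.log (n+1)
      ≤ Real.log (n.choose m) := by
  have hC : 0 < (n.choose m : ℝ) := by exact_mod_cast Nat.choose_pos hmn.le
  have h := choose_lower n m hmn.le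
  have h' : (n:ℝ) ^ n ≤ ((n:ℝ)+1) * ((n.choose m : ℝ) * (m:ℝ) ^ m * ((n - m : ℕ):ℝ) ^ (n - m)) := by
    exact_mod_cast h
  have hm' : (0:ℝ) < (m:ℝ) := by exact_mod_cast hm0
  have hnm : (0:ℝ) < ((n - m : ℕ):ℝ) := by
    have : 0 < n - m := by omega
    exact_mod_cast this
  have hn' : (0:ℝ) < (n:ℝ) := by exact_mod_cast hm0.trans hmn
  have hlog := Real.log_le_log (pow_pos hn' n) h'
  rw [Real.log_mul (by positivity) (mul_pos (mul_pos hC (pow_pos hm' m)) (pow_pos hnm _)).ne',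
    Real.log_mul (mul_pos hC (pow_pos hm' m)).ne' (pow_pos hnm _).ne',
    Real.log_mul hC.ne' (pow_pos hm' m).ne', Real.log_pow, Real.log_pow, Real.log_pow] at hlog
  push_cast at hlog ⊢
  linarith

-- log x / x → 0 composed
lemma tendsto_log_linear_div (a : ℕ) (ha : 0 < a) :
    Tendsto (fun k : ℕ => Real.log ((a:ℝ) * k + 1) / k) atTop (nhds 0) := by
  have h1 : Tendsto (fun x : ℝ => Real.log x / x) atTop (nhds 0) :=
    Real.isLittleO_log_id_atTop.tendsto_div_nhds_zero
  have h2 : Tendsto (fun k : ℕ => (a:ℝ) * k + 1) atTop atTop := by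
    apply tendsto_atTop_add_const_right
    exact (tendsto_natCast_atTop_atTop).const_mul_atTop (by exact_mod_cast ha)
  have h3 : Tendsto (fun k : ℕ => Real.log ((a:ℝ) * k + 1) / ((a:ℝ) * k + 1)) atTop (nhds 0) :=
    h1.comp h2
  have h4 : Tendsto (fun k : ℕ => ((a:ℝ) * k + 1) / k) atTop (nhds a) := by
    have : Tendsto (fun k : ℕ => (a:ℝ) + 1 / k) atTop (nhds ((a:ℝ) + 0)) :=
      (tendsto_const_nhds).add (tendsto_one_div_atTop_nhds_zero_nat)
    rw [add_zero] at this
    apply this.congr'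
    filter_upwards [eventually_ge_atTop 1] with k hk
    have hk0 : (k:ℝ) ≠ 0 := by positivity
    field_simp
  have := h3.mul h4
  rw [zero_mul] at this
  apply this.congr'
  filter_upwards [eventually_ge_atTop 1] with k hk
  have hk0 : (k:ℝ) ≠ 0 := by positivity
  have hak : ((a:ℝ) * k + 1) ≠ 0 := by positivity
  field_simp

lemma tendsto_log_choose_div (a b : ℕ) (hb : 0 < b) (hab : b < a) :
    Tendsto (fun k : ℕ => Real.log (((a*k).choose (b*k) : ℕ)) / k) atTop
      (nhds ((a:ℝ) * Real.log a - b * Real.log b - ((a-b:ℕ):ℝ) * Real.log ((a-b:ℕ):ℝ))) := by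
  set c : ℝ := (a:ℝ) * Real.log a - b * Real.log b - ((a-b:ℕ):ℝ) * Real.log ((a-b:ℕ):ℝ) with hc
  apply tendsto_of_tendsto_of_tendsto_of_le_of_le'
    (g := fun k : ℕ => c - Real.log ((a:ℝ) * k + 1) / k) (h := fun _ => c)
  · have := (tendsto_log_linear_div a (by omega)).const_sub c
    simpa using this
  · exact tendsto_const_nhds
  · -- lower bound eventually
    filter_upwards [eventually_ge_atTop 1] with k hk
    have hk0 : (0:ℝ) < (k:ℝ) := by exact_mod_cast hk
    have hm0 : 0 < b * k := Nat.mul_pos hb hk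
    have hmn : b * k < a * k := by
      exact (Nat.mul_lt_mul_right hk).mpr hab
    have hlow := log_choose_lower (a*k) (b*k) hm0 hmn
    have hsub : a * k - b * k = (a - b) * k := (Nat.sub_mul a b k).symm
    have habk : (0:ℝ) < ((a-b:ℕ):ℝ) := by
      have : 0 < a - b := by omega
      exact_mod_cast this
    have key : ((a*k : ℕ):ℝ) * Real.log (a*k : ℕ) - ((b*k:ℕ):ℝ) * Real.log (b*k : ℕ)
        - ((a*k - b*k : ℕ):ℝ) * Real.log ((a*k - b*k : ℕ):ℝ) = k * c := by
      rw [hsub]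
      have la : Real.log ((a*k : ℕ):ℝ) = Real.log a + Real.log k := by
        push_cast
        rw [Real.log_mul (Nat.cast_ne_zero.mpr (by omega)) hk0.ne']
      have lb : Real.log ((b*k : ℕ):ℝ) = Real.log b + Real.log k := by
        push_cast
        rw [Real.log_mul (Nat.cast_ne_zero.mpr hb.ne') hk0.ne']
      have lab : Real.log (((a-b)*k : ℕ):ℝ) = Real.log ((a-b:ℕ):ℝ) + Real.log k := by
        push_cast
        rw [Real.log_mul habk.ne' hk0.ne']
      rw [la, lb, lab, hc]
      push_cast
      have hba : ((a:ℝ) - b) = ((a-b:ℕ):ℝ) := by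
        have : (b:ℝ) ≤ a := by exact_mod_cast hab.le
        push_cast [Nat.cast_sub hab.le]
        ring
      rw [← hba]
      ring
    rw [key] at hlow
    push_cast at hlow
    calc c - Real.log ((a:ℝ)*k+1)/k = ((k:ℝ)*c - Real.log ((a:ℝ)*k+1))/k := by
          field_simp
      _ ≤ Real.log (((a*k).choose (b*k) : ℕ)) / k := by gcongr
  · -- upper bound eventually
    filter_upwards [eventually_ge_atTop 1] with k hk
    have hk0 : (0:ℝ) < (k:ℝ) := by exact_mod_cast hk
    have hm0 : 0 < b * k := Nat.mul_pos hb hk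
    have hmn : b * k < a * k := by
      exact (Nat.mul_lt_mul_right hk).mpr hab
    have hup := log_choose_upper (a*k) (b*k) hm0 hmn
    have hsub : a * k - b * k = (a - b) * k := (Nat.sub_mul a b k).symm
    have habk : (0:ℝ) < ((a-b:ℕ):ℝ) := by
      have : 0 < a - b := by omega
      exact_mod_cast this
    have key : ((a*k : ℕ):ℝ) * Real.log (a*k : ℕ) - ((b*k:ℕ):ℝ) * Real.log (b*k : ℕ)
        - ((a*k - b*k : ℕ):ℝ) * Real.log ((a*k - b*k : ℕ):ℝ) = k * c := by
      rw [hsub]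
      have la : Real.log ((a*k : ℕ):ℝ) = Real.log a + Real.log k := by
        push_cast
        rw [Real.log_mul (Nat.cast_ne_zero.mpr (by omega)) hk0.ne']
      have lb : Real.log ((b*k : ℕ):ℝ) = Real.log b + Real.log k := by
        push_cast
        rw [Real.log_mul (Nat.cast_ne_zero.mpr hb.ne') hk0.ne']
      have lab : Real.log (((a-b)*k : ℕ):ℝ) = Real.log ((a-b:ℕ):ℝ) + Real.log k := by
        push_cast
        rw [Real.log_mul habk.ne' hk0.ne']
      rw [la, lb, lab, hc]
      push_cast
      have hba : ((a:ℝ) - b) = ((a-b:ℕ):ℝ) := by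
        have : (b:ℝ) ≤ a := by exact_mod_cast hab.le
        push_cast [Nat.cast_sub hab.le]
        ring
      rw [← hba]
      ring
    rw [key] at hup
    calc Real.log (((a*k).choose (b*k) : ℕ)) / k ≤ ((k:ℝ)*c)/k := by gcongr
      _ = c := by field_simp

noncomputable def G (θ : ℕ → ℝ) (k : ℕ) : ℝ :=
  28 * Real.log (27/4) / 36
  + (14/36) * (Real.log (θ (14*k)) / (14*(k:ℝ)))
  + (Real.log (7/8) + (Real.log 8 - Real.log 9)) / (36*(k:ℝ))
  + (1/36) * (Real.log (((9*k).choose (8*k) : ℕ)) / k)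
  + ((2*(k:ℝ)-1)/(36*(k:ℝ))) * (Real.log (((21*k).choose (14*k) : ℕ)) / k)

theorem stmt_16 (θ : ℕ → ℝ) (hθpos : ∀ n, 0 < θ n)
    (hθ : Tendsto (fun n : ℕ => θ n ^ (1 / (n : ℝ))) atTop (nhds 1)) :
    Tendsto (fun k : ℕ =>
        ((27 / 4 : ℝ) ^ (28 * k ^ 2) * θ (14 * k) ^ k * (7 / 8 : ℝ) ^ k *
            (((9 * k - 1).choose (8 * k - 1) : ℝ)) ^ k *
            (((21 * k).choose (14 * k) : ℝ)) ^ (2 * k - 1)) ^ (1 / (36 * (k : ℝ) ^ 2)))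
      atTop (nhds (81 / 8)) := by
  -- log θ n / n → 0
  have hlogθ : Tendsto (fun n : ℕ => Real.log (θ n) / n) atTop (nhds 0) := by
    have h := (Real.continuousAt_log one_ne_zero).tendsto.comp hθ
    rw [Real.log_one] at h
    apply h.congr
    intro n
    simp only [Function.comp_apply]
    rw [Real.log_rpow (hθpos n)]
    ring
  have hθ14 : Tendsto (fun k : ℕ => Real.log (θ (14*k)) / (14*(k:ℝ))) atTop (nhds 0) := by
    have hcomp : Tendsto (fun k : ℕ => 14*k) atTop atTop :=
      tendsto_atTop_mono (fun k => Nat.le_mul_of_pos_left k (by norm_num)) tendsto_id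
    have := hlogθ.comp hcomp
    apply this.congr
    intro k
    simp only [Function.comp_apply]
    push_cast
    ring_nf
  have c1 := tendsto_log_choose_div 9 8 (by norm_num) (by norm_num)
  have c2 := tendsto_log_choose_div 21 14 (by norm_num) (by norm_num)
  have hconst : Tendsto (fun k : ℕ =>
      (Real.log (7/8) + (Real.log 8 - Real.log 9)) / (36*(k:ℝ))) atTop (nhds 0) := by
    have h := tendsto_const_div_atTop_nhds_zero_nat
      ((Real.log (7/8) + (Real.log 8 - Real.log 9)) / 36)
    apply h.congr'
    filter_upwards [eventually_ge_atTop 1] with k hk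
    have hk0 : (k:ℝ) ≠ 0 := by positivity
    field_simp
  have hcoef : Tendsto (fun k : ℕ => (2*(k:ℝ)-1)/(36*(k:ℝ))) atTop (nhds (2/36)) := by
    have h : Tendsto (fun k : ℕ => 2/36 - (1/36) * (1/(k:ℝ))) atTop (nhds (2/36 - (1/36)*0)) :=
      tendsto_const_nhds.sub (tendsto_const_nhds.mul tendsto_one_div_atTop_nhds_zero_nat)
    rw [mul_zero, sub_zero] at h
    apply h.congr'
    filter_upwards [eventually_ge_atTop 1] with k hk
    have hk0 : (k:ℝ) ≠ 0 := by positivity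
    field_simp
  have hG : Tendsto (G θ) atTop (nhds (Real.log (81/8))) := by
    have t1 : Tendsto (fun _ : ℕ => 28 * Real.log (27/4) / 36) atTop
        (nhds (28 * Real.log (27/4) / 36)) := tendsto_const_nhds
    have h := ((((t1.add (hθ14.const_mul (14/36))).add hconst).add
      (c1.const_mul (1/36))).add (hcoef.mul c2)).congr
      (f₂ := G θ) (by intro k; simp only [G])
    convert h using 2
    norm_num
    have l1 : Real.log 1 = 0 := Real.log_one
    have l27 : Real.log (27/4) = 3 * Real.log 3 - 2 * Real.log 2 := by
      rw [Real.log_div (by norm_num) (by norm_num),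
        show (27:ℝ) = 3^3 by norm_num, show (4:ℝ) = 2^2 by norm_num,
        Real.log_pow, Real.log_pow]
      push_cast; ring
    have l9 : Real.log 9 = 2 * Real.log 3 := by
      rw [show (9:ℝ) = 3^2 by norm_num, Real.log_pow]; push_cast; ring
    have l8 : Real.log 8 = 3 * Real.log 2 := by
      rw [show (8:ℝ) = 2^3 by norm_num, Real.log_pow]; push_cast; ring
    have l21 : Real.log 21 = Real.log 3 + Real.log 7 := by
      rw [show (21:ℝ) = 3*7 by norm_num, Real.log_mul (by norm_num) (by norm_num)]
    have l14 : Real.log 14 = Real.log 2 + Real.log 7 := by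
      rw [show (14:ℝ) = 2*7 by norm_num, Real.log_mul (by norm_num) (by norm_num)]
    have l81 : Real.log (81/8) = 4 * Real.log 3 - 3 * Real.log 2 := by
      rw [Real.log_div (by norm_num) (by norm_num),
        show (81:ℝ) = 3^4 by norm_num, show (8:ℝ) = 2^3 by norm_num,
        Real.log_pow, Real.log_pow]
      push_cast; ring
    rw [l27, l9, l8, l21, l14, l81]
    ring
  have hexp : Tendsto (fun k => Real.exp (G θ k)) atTop (nhds (81/8)) := by
    have := (Real.continuous_exp.tendsto _).comp hG
    rwa [Real.exp_log (by norm_num : (0:ℝ) < 81/8)] at this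
  apply hexp.congr'
  filter_upwards [eventually_ge_atTop 1] with k hk
  have hK : (0:ℝ) < (k:ℝ) := by exact_mod_cast hk
  set C1n := (9*k-1).choose (8*k-1) with hC1n
  set C9 := (9*k).choose (8*k) with hC9
  set C2n := (21*k).choose (14*k) with hC2n
  have hC1pos : 0 < (C1n:ℝ) := by
    have : 8*k-1 ≤ 9*k-1 := by omega
    exact_mod_cast Nat.choose_pos this
  have hC9pos : 0 < (C9:ℝ) := by
    have : 8*k ≤ 9*k := by omega
    exact_mod_cast Nat.choose_pos this
  have hC2pos : 0 < (C2n:ℝ) := by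
    have : 14*k ≤ 21*k := by omega
    exact_mod_cast Nat.choose_pos this
  -- identity relating C1n and C9
  have hid : (9*k) * C1n = C9 * (8*k) := by
    have h9 : 9*k = (9*k-1)+1 := by omega
    have h8 : 8*k = (8*k-1)+1 := by omega
    rw [hC1n, hC9, h9, h8]
    exact Nat.add_one_mul_choose_eq (9*k-1) (8*k-1)
  have hidR : (9:ℝ) * k * C1n = (C9:ℝ) * (8 * k) := by exact_mod_cast hid
  have hlogC1 : Real.log (C1n:ℝ) = Real.log (C9:ℝ) + Real.log 8 - Real.log 9 := by
    have hC1eq : (C1n:ℝ) = (C9:ℝ) * 8 / 9 := by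
      have h9 : (9:ℝ) * C1n = (C9:ℝ) * 8 := by
        apply mul_left_cancel₀ hK.ne'
        linear_combination hidR
      field_simp
      linarith
    rw [hC1eq, Real.log_div (by positivity) (by norm_num),
      Real.log_mul hC9pos.ne' (by norm_num)]
  have hθk : 0 < θ (14*k) := hθpos (14*k)
  have hP1 : (0:ℝ) < (27/4:ℝ) ^ (28*k^2) := by positivity
  have hP2 : (0:ℝ) < θ (14*k) ^ k := pow_pos hθk k
  have hP3 : (0:ℝ) < (7/8:ℝ) ^ k := by positivity
  have hP4 : (0:ℝ) < (C1n:ℝ) ^ k := pow_pos hC1pos k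
  have hP5 : (0:ℝ) < (C2n:ℝ) ^ (2*k-1) := pow_pos hC2pos _
  -- positivity of the big product
  have hF : (0:ℝ) < (27 / 4 : ℝ) ^ (28 * k ^ 2) * θ (14 * k) ^ k * (7 / 8 : ℝ) ^ k *
      (C1n:ℝ) ^ k * (C2n:ℝ) ^ (2 * k - 1) := by
    have := hθpos (14*k)
    positivity
  rw [Real.rpow_def_of_pos hF]
  congr 1
  rw [Real.log_mul (mul_pos (mul_pos (mul_pos hP1 hP2) hP3) hP4).ne' hP5.ne',
    Real.log_mul (mul_pos (mul_pos hP1 hP2) hP3).ne' hP4.ne',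
    Real.log_mul (mul_pos hP1 hP2).ne' hP3.ne',
    Real.log_mul hP1.ne' hP2.ne', Real.log_pow, Real.log_pow, Real.log_pow,
    Real.log_pow, Real.log_pow, hlogC1]
  have hcast : ((2*k-1 : ℕ):ℝ) = 2*(k:ℝ) - 1 := by
    have : 1 ≤ 2*k := by omega
    push_cast [Nat.cast_sub this]
    ring
  rw [hcast]
  simp only [G]
  push_cast
  field_simp
  ring
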